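/- Let R be a commutative ring, a,b,c,d ∈ R, and F(x,y,z,w) the determinant of the 4×4 matrix with rows (a·y·z·w, x, 1, a), (b·x·z·w, y, 1, b), (c·x·y·w, z, 1, c), (d·x·y·z, w, 1, d). Then for all units x,y,z,w ∈ R×: (x·y·z·w)² · F(a·x⁻¹, b·y⁻¹, c·z⁻¹, d·w⁻¹) = −a·b·c·d · F(x,y,z,w). -/

import Mathlib

/-- The Hutchinson determinantal equation of the Weddle quartic surface. -/
def weddle {R : Type*} [CommRing R] (a b c d x y z w : R) : R :=
  Matrix.det !![a*y*z*w, x, 1, a;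
                b*x*z*w, y, 1, b;
                c*x*y*w, z, 1, c;
                d*x*y*z, w, 1, d]

set_option maxHeartbeats 1200000 in
theorem weddle_hutchinson_involution {R : Type*} [CommRing R] (a b c d : R)
    (x y z w : Rˣ) :
    ((x : R) * y * z * w)^2 *
      weddle a b c d (a * (x⁻¹ : Rˣ)) (b * (y⁻¹ : Rˣ)) (c * (z⁻¹ : Rˣ)) (d * (w⁻¹ : Rˣ))
      = -(a * b * c * d) * weddle a b c d x y z w := by
  have hx : (x : R) * ((x⁻¹ : Rˣ) : R) = 1 := by rw [← Units.val_mul, mul_inv_cancel, Units.val_one]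
  have hy : (y : R) * ((y⁻¹ : Rˣ) : R) = 1 := by rw [← Units.val_mul, mul_inv_cancel, Units.val_one]
  have hz : (z : R) * ((z⁻¹ : Rˣ) : R) = 1 := by rw [← Units.val_mul, mul_inv_cancel, Units.val_one]
  have hw : (w : R) * ((w⁻¹ : Rˣ) : R) = 1 := by rw [← Units.val_mul, mul_inv_cancel, Units.val_one]
  set X : R := ((x⁻¹ : Rˣ) : R)
  set Y : R := ((y⁻¹ : Rˣ) : R)
  set Z : R := ((z⁻¹ : Rˣ) : R)
  set W : R := ((w⁻¹ : Rˣ) : R)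
  rw [weddle, weddle, Matrix.det_succ_row_zero, Matrix.det_succ_row_zero]
  simp [Fin.sum_univ_succ, Matrix.det_fin_three, Matrix.submatrix, Fin.succAbove]
  linear_combination ((-1)*a*b*c^2*d^2*(x:R)*(y:R)^2*(z:R)^2*(w:R)^2*Z*W^2 + a*b*c^2*d^2*(x:R)*(y:R)^2*(z:R)^2*(w:R)^2*Z^2*W + a*b^2*c*d^2*(x:R)*(y:R)^2*(z:R)^2*(w:R)^2*Y*W^2 + (-1)*a*b^2*c*d^2*(x:R)*(y:R)^2*(z:R)^2*(w:R)^2*Y^2*W + (-1)*a*b^2*c^2*d*(x:R)*(y:R)^2*(z:R)^2*(w:R)^2*Y*Z^2 + a*b^2*c^2*d*(x:R)*(y:R)^2*(z:R)^2*(w:R)^2*Y^2*Z + (-1)*a^2*b*c*d^2*(y:R)^2*(z:R)^2*(w:R)^2*Z*W + a^2*b*c*d^2*(y:R)^2*(z:R)^2*(w:R)^2*Y*W + a^2*b*c*d^2*(x:R)*(y:R)^2*(z:R)^2*(w:R)^2*Z*W^2 + (-1)*a^2*b*c*d^2*(x:R)*(y:R)^2*(z:R)^2*(w:R)^2*Y*W^2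 + (-1)*a^2*b*c*d^2*(x:R)*(y:R)^2*(z:R)^2*(w:R)^2*X*Z*W + a^2*b*c*d^2*(x:R)*(y:R)^2*(z:R)^2*(w:R)^2*X*Y*W + a^2*b*c^2*d*(y:R)^2*(z:R)^2*(w:R)^2*Z*W + (-1)*a^2*b*c^2*d*(y:R)^2*(z:R)^2*(w:R)^2*Y*Z + (-1)*a^2*b*c^2*d*(x:R)*(y:R)^2*(z:R)^2*(w:R)^2*Z^2*W + a^2*b*c^2*d*(x:R)*(y:R)^2*(z:R)^2*(w:R)^2*Y*Z^2 + a^2*b*c^2*d*(x:R)*(y:R)^2*(z:R)^2*(w:R)^2*X*Z*W + (-1)*a^2*b*c^2*d*(x:R)*(y:R)^2*(z:R)^2*(w:R)^2*X*Y*Z + (-1)*a^2*b^2*c*d*(y:R)^2*(z:R)^2*(w:R)^2*Y*W + a^2*b^2*c*d*(y:R)^2*(z:R)^2*(w:R)^2*Y*Z + a^2*b^2*c*d*(x:R)*(y:R)^2*(z:R)^2*(w:R)^2*Y^2*W + (-1)*a^2*b^2*c*d*(x:R)*(y:R)^2*(z:R)^2*(w:R)^2*Y^2*Z + (-1)*a^2*b^2*c*d*(x:R)*(y:R)^2*(z:R)^2*(w:R)^2*X*Y*W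 + a^2*b^2*c*d*(x:R)*(y:R)^2*(z:R)^2*(w:R)^2*X*Y*Z) * hx + (a*b*c^2*d^2*(x:R)^2*(y:R)*(z:R)^2*(w:R)^2*Z*W^2 + (-1)*a*b*c^2*d^2*(x:R)^2*(y:R)*(z:R)^2*(w:R)^2*Z^2*W + (-1)*a*b^2*c*d^2*(x:R)*(z:R)^2*(w:R)^2*W + a*b^2*c*d^2*(x:R)*(y:R)*(z:R)^2*(w:R)^2*W^2 + (-1)*a*b^2*c*d^2*(x:R)*(y:R)*(z:R)^2*(w:R)^2*Y*W + a*b^2*c*d^2*(x:R)^2*(z:R)^2*(w:R)^2*Z*W + (-1)*a*b^2*c*d^2*(x:R)^2*(y:R)*(z:R)^2*(w:R)^2*Z*W^2 + a*b^2*c*d^2*(x:R)^2*(y:R)*(z:R)^2*(w:R)^2*Y*Z*W + a*b^2*c^2*d*(x:R)*(z:R)^2*(w:R)^2*Z + (-1)*a*b^2*c^2*d*(x:R)*(y:R)*(z:R)^2*(w:R)^2*Z^2 + a*b^2*c^2*d*(x:R)*(y:R)*(z:R)^2*(w:R)^2*Y*Z + (-1)*a*b^2*c^2*d*(x:R)^2*(z:R)^2*(w:R)^2*Z*W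 + a*b^2*c^2*d*(x:R)^2*(y:R)*(z:R)^2*(w:R)^2*Z^2*W + (-1)*a*b^2*c^2*d*(x:R)^2*(y:R)*(z:R)^2*(w:R)^2*Y*Z*W + a^2*b*c*d^2*(y:R)*(z:R)^2*(w:R)^2*W + (-1)*a^2*b*c*d^2*(x:R)*(y:R)*(z:R)^2*(w:R)^2*W^2 + (-1)*a^2*b*c^2*d*(y:R)*(z:R)^2*(w:R)^2*Z + a^2*b*c^2*d*(x:R)*(y:R)*(z:R)^2*(w:R)^2*Z^2 + (-1)*a^2*b^2*c*d*(y:R)*(z:R)^2*(w:R)^2*W + a^2*b^2*c*d*(y:R)*(z:R)^2*(w:R)^2*Z + a^2*b^2*c*d*(x:R)*(z:R)^2*(w:R)^2*W + (-1)*a^2*b^2*c*d*(x:R)*(z:R)^2*(w:R)^2*Z + a^2*b^2*c*d*(x:R)*(y:R)*(z:R)^2*(w:R)^2*Y*W + (-1)*a^2*b^2*c*d*(x:R)*(y:R)*(z:R)^2*(w:R)^2*Y*Z) * hy + (a*b*c^2*d^2*(x:R)*(y:R)^2*(w:R)^2*W + (-1)*a*b*c^2*d^2*(x:R)*(y:R)^2*(z:R)*(w:R)^2*W^2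 + a*b*c^2*d^2*(x:R)*(y:R)^2*(z:R)*(w:R)^2*Z*W + (-1)*a*b*c^2*d^2*(x:R)^2*(y:R)*(w:R)^2*W + a*b*c^2*d^2*(x:R)^2*(y:R)*(z:R)*(w:R)^2*W^2 + (-1)*a*b*c^2*d^2*(x:R)^2*(y:R)*(z:R)*(w:R)^2*Z*W + a*b^2*c*d^2*(x:R)^2*(z:R)*(w:R)^2*W + (-1)*a*b^2*c*d^2*(x:R)^2*(y:R)*(z:R)*(w:R)^2*W^2 + a*b^2*c^2*d*(x:R)*(z:R)*(w:R)^2 + (-1)*a*b^2*c^2*d*(x:R)*(y:R)*(w:R)^2 + (-1)*a*b^2*c^2*d*(x:R)*(y:R)*(z:R)*(w:R)^2*Z + (-1)*a*b^2*c^2*d*(x:R)^2*(z:R)*(w:R)^2*W + a*b^2*c^2*d*(x:R)^2*(y:R)*(w:R)^2*W + a*b^2*c^2*d*(x:R)^2*(y:R)*(z:R)*(w:R)^2*Z*W + (-1)*a^2*b*c*d^2*(y:R)^2*(z:R)*(w:R)^2*W + a^2*b*c*d^2*(x:R)*(y:R)^2*(z:R)*(w:R)^2*W^2 + (-1)*a^2*b*c^2*d*(y:R)*(z:R)*(w:R)^2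 + a^2*b*c^2*d*(y:R)^2*(z:R)*(w:R)^2*W + a^2*b*c^2*d*(x:R)*(y:R)*(w:R)^2 + a^2*b*c^2*d*(x:R)*(y:R)*(z:R)*(w:R)^2*Z + (-1)*a^2*b*c^2*d*(x:R)*(y:R)^2*(w:R)^2*W + (-1)*a^2*b*c^2*d*(x:R)*(y:R)^2*(z:R)*(w:R)^2*Z*W + a^2*b^2*c*d*(y:R)*(z:R)*(w:R)^2 + (-1)*a^2*b^2*c*d*(x:R)*(z:R)*(w:R)^2) * hz + (a*b*c^2*d^2*(x:R)*(y:R)^2*(w:R) + (-1)*a*b*c^2*d^2*(x:R)*(y:R)^2*(z:R) + (-1)*a*b*c^2*d^2*(x:R)*(y:R)^2*(z:R)*(w:R)*W + (-1)*a*b*c^2*d^2*(x:R)^2*(y:R)*(w:R) + a*b*c^2*d^2*(x:R)^2*(y:R)*(z:R) + a*b*c^2*d^2*(x:R)^2*(y:R)*(z:R)*(w:R)*W + (-1)*a*b^2*c*d^2*(x:R)*(z:R)^2*(w:R) + a*b^2*c*d^2*(x:R)*(y:R)*(z:R)^2 + a*b^2*c*d^2*(x:R)*(y:R)*(z:R)^2*(w:R)*W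 + a*b^2*c*d^2*(x:R)^2*(z:R)*(w:R) + (-1)*a*b^2*c*d^2*(x:R)^2*(y:R)*(z:R) + (-1)*a*b^2*c*d^2*(x:R)^2*(y:R)*(z:R)*(w:R)*W + (-1)*a*b^2*c^2*d*(x:R)^2*(z:R)*(w:R) + a*b^2*c^2*d*(x:R)^2*(y:R)*(w:R) + a^2*b*c*d^2*(y:R)*(z:R)^2*(w:R) + (-1)*a^2*b*c*d^2*(y:R)^2*(z:R)*(w:R) + (-1)*a^2*b*c*d^2*(x:R)*(y:R)*(z:R)^2 + (-1)*a^2*b*c*d^2*(x:R)*(y:R)*(z:R)^2*(w:R)*W + a^2*b*c*d^2*(x:R)*(y:R)^2*(z:R) + a^2*b*c*d^2*(x:R)*(y:R)^2*(z:R)*(w:R)*W + a^2*b*c^2*d*(y:R)^2*(z:R)*(w:R) + (-1)*a^2*b*c^2*d*(x:R)*(y:R)^2*(w:R) + (-1)*a^2*b^2*c*d*(y:R)*(z:R)^2*(w:R) + a^2*b^2*c*d*(x:R)*(z:R)^2*(w:R)) * hw
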